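/- arXiv:1809.04242 — 5 statements merged into one kernel-verified Lean document; each statement's English description precedes it below -/
import Mathlib

section
/- Let n ≥ 1, let 1 ≤ m < n, and let w, u be permutations of {1,2,…,n} with w ≤_m u in the m-Bruhat order. Then w(a) ≤ u(a) for every a with 1 ≤ a ≤ m, and w(b) ≥ u(b) for every b with m < b ≤ n. -/
/-- The length (number of inversions) of a permutation of `Fin n`
(representing `{1,…,n}` with `i : Fin n` standing for `i+1`). -/
def invLength {n : ℕ} (w : Equiv.Perm (Fin n)) : ℕ :=
  (Finset.univ.filter fun p : Fin n × Fin n => p.1 < p.2 ∧ w p.2 < w p.1).card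

/-- `w τ_{a₁b₁} ⋯ τ_{aₛbₛ}` for the list of pairs `L = [(a₁,b₁),…,(aₛ,bₛ)]`. -/
def chainProd {n : ℕ} (w : Equiv.Perm (Fin n)) (L : List (Fin n × Fin n)) :
    Equiv.Perm (Fin n) :=
  w * (L.map fun p => Equiv.swap p.1 p.2).prod

/-- The list `L = [(a₁,b₁),…,(aₛ,bₛ)]` is a chain witnessing `w ≤ₘ u`:
each `aᵢ ≤ m < bᵢ` (in 1-indexed terms, i.e. `(aᵢ : ℕ) < m ≤ (bᵢ : ℕ)` in 0-indexed `Fin n`),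
`u = w τ_{a₁b₁} ⋯ τ_{aₛbₛ}`, and `ℓ(w τ_{a₁b₁} ⋯ τ_{aᵢbᵢ}) = ℓ(w) + i` for all `i ≤ s`. -/
def IsMChain {n : ℕ} (m : ℕ) (w u : Equiv.Perm (Fin n)) (L : List (Fin n × Fin n)) : Prop :=
  (∀ p ∈ L, (p.1 : ℕ) < m ∧ m ≤ (p.2 : ℕ)) ∧
  u = chainProd w L ∧
  ∀ i, i ≤ L.length → invLength (chainProd w (L.take i)) = invLength w + i

/-- The `m`-Bruhat order `w ≤ₘ u`. -/
def mBruhat {n : ℕ} (m : ℕ) (w u : Equiv.Perm (Fin n)) : Prop :=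
  ∃ L, IsMChain m w u L

lemma key {n : ℕ} (w : Equiv.Perm (Fin n)) (a b : Fin n) (hab : a < b)
    (hw : w b < w a) :
    invLength (w * Equiv.swap a b) < invLength w := by
  classical
  set σ := Equiv.swap a b with hσ
  set A := Finset.univ.filter (fun p : Fin n × Fin n => p.1 < p.2 ∧ w p.2 < w p.1) with hA
  set B := Finset.univ.filter
    (fun p : Fin n × Fin n => p.1 < p.2 ∧ (w * σ) p.2 < (w * σ) p.1) with hB
  have hmemA : ∀ p : Fin n × Fin n, p ∈ A ↔ p.1 < p.2 ∧ w p.2 < w p.1 := by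
    intro p; simp [hA]
  have hmemB : ∀ p : Fin n × Fin n, p ∈ B ↔ p.1 < p.2 ∧ w (σ p.2) < w (σ p.1) := by
    intro p; rw [hB, Finset.mem_filter]; simp [Equiv.Perm.mul_apply]
  set f : Fin n × Fin n → Fin n × Fin n :=
    fun p => if w p.2 < w p.1 then p else (σ p.1, σ p.2) with hf
  have habA : (a, b) ∈ A := (hmemA _).2 ⟨hab, hw⟩
  have hmaps : ∀ p ∈ B, f p ∈ A.erase (a, b) := by
    intro p hp
    obtain ⟨h1, h2⟩ := (hmemB p).1 hp
    by_cases hc : w p.2 < w p.1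
    · rw [hf]; simp only [if_pos hc]
      refine Finset.mem_erase.2 ⟨?_, (hmemA p).2 ⟨h1, hc⟩⟩
      rintro rfl
      simp only [hσ, Equiv.swap_apply_left, Equiv.swap_apply_right] at h2
      exact absurd h2 (not_lt.2 hw.le)
    · rw [hf]; simp only [if_neg hc]
      have hne : p.1 ≠ p.2 := ne_of_lt h1
      have hlt : w p.1 < w p.2 :=
        lt_of_le_of_ne (le_of_not_gt hc) (fun h => hne (w.injective h))
      by_cases e2a : p.2 = a
      · have h1a : p.1 < a := e2a ▸ h1
        have e1a : p.1 ≠ a := ne_of_lt h1a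
        have e1b : p.1 ≠ b := ne_of_lt (h1a.trans hab)
        rw [e2a] at h2 ⊢
        rw [hσ, Equiv.swap_apply_left, Equiv.swap_apply_of_ne_of_ne e1a e1b] at h2 ⊢
        refine Finset.mem_erase.2 ⟨?_, (hmemA _).2 ⟨h1a.trans hab, h2⟩⟩
        intro hcon
        exact e1a (congrArg Prod.fst hcon)
      · by_cases e1b : p.1 = b
        · have h2b : b < p.2 := e1b ▸ h1
          have e2b : p.2 ≠ b := (ne_of_lt h2b).symm
          rw [e1b] at h2 ⊢
          rw [hσ, Equiv.swap_apply_right, Equiv.swap_apply_of_ne_of_ne e2a e2b] at h2 ⊢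
          refine Finset.mem_erase.2 ⟨?_, (hmemA _).2 ⟨hab.trans h2b, h2⟩⟩
          intro hcon
          exact e2b (congrArg Prod.snd hcon)
        · exfalso
          by_cases e1a : p.1 = a
          · by_cases e2b : p.2 = b
            · rw [e1a, e2b, hσ, Equiv.swap_apply_left, Equiv.swap_apply_right] at h2
              exact absurd h2 (not_lt.2 hw.le)
            · rw [e1a, hσ, Equiv.swap_apply_left,
                Equiv.swap_apply_of_ne_of_ne e2a e2b] at h2
              rw [e1a] at hlt
              exact absurd (hlt.trans h2) (not_lt.2 hw.le)
          · by_cases e2b : p.2 = b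
            · rw [e2b, hσ, Equiv.swap_apply_right,
                Equiv.swap_apply_of_ne_of_ne e1a e1b] at h2
              rw [e2b] at hlt
              exact absurd (h2.trans hlt) (not_lt.2 hw.le)
            · rw [hσ, Equiv.swap_apply_of_ne_of_ne e1a e1b,
                Equiv.swap_apply_of_ne_of_ne e2a e2b] at h2
              exact hc h2
  have hinj : Set.InjOn f B := by
    intro p hp q hq hpq
    obtain ⟨hp1, hp2⟩ := (hmemB p).1 hp
    obtain ⟨hq1, hq2⟩ := (hmemB q).1 hq
    by_cases hcp : w p.2 < w p.1 <;> by_cases hcq : w q.2 < w q.1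
    · rw [hf] at hpq; simpa only [if_pos hcp, if_pos hcq] using hpq
    · exfalso
      rw [hf] at hpq; simp only [if_pos hcp, if_neg hcq] at hpq
      have e1 : p.1 = σ q.1 := congrArg Prod.fst hpq
      have e2 : p.2 = σ q.2 := congrArg Prod.snd hpq
      rw [e1, e2, hσ, Equiv.swap_apply_self, Equiv.swap_apply_self] at hp2
      exact hcq hp2
    · exfalso
      rw [hf] at hpq; simp only [if_neg hcp, if_pos hcq] at hpq
      have e1 : σ p.1 = q.1 := congrArg Prod.fst hpq
      have e2 : σ p.2 = q.2 := congrArg Prod.snd hpq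
      rw [← e1, ← e2, hσ, Equiv.swap_apply_self, Equiv.swap_apply_self] at hq2
      exact hcp hq2
    · rw [hf] at hpq; simp only [if_neg hcp, if_neg hcq] at hpq
      have e1 : σ p.1 = σ q.1 := congrArg Prod.fst hpq
      have e2 : σ p.2 = σ q.2 := congrArg Prod.snd hpq
      exact Prod.ext (σ.injective e1) (σ.injective e2)
  have hle : B.card ≤ (A.erase (a, b)).card :=
    Finset.card_le_card_of_injOn f hmaps hinj
  have hlt : (A.erase (a, b)).card < A.card := Finset.card_erase_lt_of_mem habA
  have eB : invLength (w * σ) = B.card := rfl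
  have eA : invLength w = A.card := rfl
  omega

lemma step_pos {n : ℕ} (m : ℕ) : ∀ (L : List (Fin n × Fin n)) (w : Equiv.Perm (Fin n)),
    (∀ p ∈ L, (p.1 : ℕ) < m ∧ m ≤ (p.2 : ℕ)) →
    (∀ i, i ≤ L.length → invLength (chainProd w (L.take i)) = invLength w + i) →
    ∀ x : Fin n, ((x : ℕ) < m → w x ≤ chainProd w L x) ∧
      (m ≤ (x : ℕ) → chainProd w L x ≤ w x)
  | [], w, _, _, x => by simp [chainProd]
  | (q :: L), w, hL, hlen, x => by
    obtain ⟨a, b⟩ := q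
    have hq := hL (a, b) List.mem_cons_self
    have hqa : (a : ℕ) < m := hq.1
    have hqb : m ≤ (b : ℕ) := hq.2
    have hab : a < b := by
      have := hq.1.trans_le hq.2
      exact Fin.lt_def.2 this
    have hcons : chainProd w ((a, b) :: L) = chainProd (w * Equiv.swap a b) L := by
      simp [chainProd, mul_assoc]
    have h1 : invLength (w * Equiv.swap a b) = invLength w + 1 := by
      have := hlen 1 (by simp)
      simpa [chainProd] using this
    have hwab : w a < w b := by
      rcases lt_trichotomy (w a) (w b) with h | h | h
      · exact h
      · exact absurd (w.injective h) (ne_of_lt hab)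
      · have := key w a b hab h; omega
    have hlen' : ∀ i, i ≤ L.length →
        invLength (chainProd (w * Equiv.swap a b) (L.take i))
          = invLength (w * Equiv.swap a b) + i := by
      intro i hi
      have h2 := hlen (i + 1) (by simpa using Nat.succ_le_succ hi)
      have e : chainProd w (((a, b) :: L).take (i + 1))
          = chainProd (w * Equiv.swap a b) (L.take i) := by
        simp [chainProd, mul_assoc]
      rw [e] at h2
      omega
    have IH := step_pos m L (w * Equiv.swap a b)
      (fun p hp => hL p (List.mem_cons_of_mem _ hp)) hlen'
    rw [hcons]
    constructor
    · intro hx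
      have hxb : x ≠ b := by
        intro h; rw [h] at hx; omega
      have h2 : w x ≤ (w * Equiv.swap a b) x := by
        by_cases hxa : x = a
        · subst hxa
          rw [Equiv.Perm.mul_apply, Equiv.swap_apply_left]
          exact hwab.le
        · rw [Equiv.Perm.mul_apply, Equiv.swap_apply_of_ne_of_ne hxa hxb]
      exact h2.trans ((IH x).1 hx)
    · intro hx
      have hxa : x ≠ a := by
        intro h; rw [h] at hx; omega
      have h2 : (w * Equiv.swap a b) x ≤ w x := by
        by_cases hxb : x = b
        · subst hxb
          rw [Equiv.Perm.mul_apply, Equiv.swap_apply_right]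
          exact hwab.le
        · rw [Equiv.Perm.mul_apply, Equiv.swap_apply_of_ne_of_ne hxa hxb]
      exact ((IH x).2 hx).trans h2

/-- if `w ≤ₘ u` then `w(a) ≤ u(a)` for `a ≤ m` and `w(b) ≥ u(b)` for `m < b`. -/
theorem stmt0 (n m : ℕ) (hn : 1 ≤ n) (hm : 1 ≤ m) (hmn : m < n)
    (w u : Equiv.Perm (Fin n)) (h : mBruhat m w u) :
    (∀ a : Fin n, (a : ℕ) < m → w a ≤ u a) ∧
    (∀ b : Fin n, m ≤ (b : ℕ) → u b ≤ w b) := by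
  obtain ⟨L, hmem, hu, hlen⟩ := h
  subst hu
  have H := step_pos m L w hmem hlen
  exact ⟨fun a ha => (H a).1 ha, fun b hb => (H b).2 hb⟩
end

section
/- Let n ≥ 1, let 1 ≤ m < n, and let w, u be permutations of {1,2,…,n} with w →^{r_m} u. Then the set {w(1), w(2), …, w(m)} ∪ {w(b) : m < b ≤ n and w(b) > u(b)} has exactly m + ℓ(u) − ℓ(w) elements. -/
/-- `w →^{r_m} u` : as `w ≤ₘ u`, with the `bᵢ` pairwise distinct. -/
def rmRel {n : ℕ} (m : ℕ) (w u : Equiv.Perm (Fin n)) : Prop :=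
  ∃ L, IsMChain m w u L ∧ (L.map Prod.snd).Nodup

open Equiv Finset

def Fmap {n : ℕ} (a b : Fin n) (p : Fin n × Fin n) : Fin n × Fin n :=
  if (p.1 = a ∧ p.2 < b) ∨ (p.2 = b ∧ a < p.1) then p
  else (Equiv.swap a b p.1, Equiv.swap a b p.2)

lemma Fmap_invol {n : ℕ} {a b : Fin n} (hab : a < b) {p : Fin n × Fin n}
    (hp : p.1 < p.2) : Fmap a b (Fmap a b p) = p := by
  obtain ⟨i, j⟩ := p
  simp only at hp
  by_cases h1 : (i = a ∧ j < b) ∨ (j = b ∧ a < i)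
  · simp only [Fmap, if_pos h1]
  · have h1a : i = a → ¬ j < b := fun h h' => h1 (Or.inl ⟨h, h'⟩)
    have h1b : j = b → ¬ a < i := fun h h' => h1 (Or.inr ⟨h, h'⟩)
    rcases eq_or_ne i a with rfl | hia
    · have hbj : b ≤ j := not_lt.mp (h1a rfl)
      rcases eq_or_ne j b with rfl | hjb
      · simp [Fmap, hab.ne, hab.ne', lt_asymm hab, lt_irrefl]
      · have hbj' : b < j := lt_of_le_of_ne hbj (Ne.symm hjb)
        have hja : j ≠ i := (hab.trans hbj').ne'
        simp [Fmap, hab.ne, hab.ne', hja, hjb, lt_asymm hbj',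
          Equiv.swap_apply_of_ne_of_ne, lt_asymm hab]
    · rcases eq_or_ne j b with rfl | hjb
      · have hia' : i < a := lt_of_le_of_ne (not_lt.mp (h1b rfl)) hia
        have hib : i ≠ j := (hia'.trans hab).ne
        simp [Fmap, hia, hib, hab.ne, hab.ne', lt_asymm hia', lt_asymm hab,
          Equiv.swap_apply_of_ne_of_ne]
      · rcases eq_or_ne i b with rfl | hib
        · have hja : j ≠ a := (hab.trans hp).ne'
          simp [Fmap, hja, hjb, hab.ne, hab.ne', lt_asymm hp, lt_asymm hab,
            Equiv.swap_apply_of_ne_of_ne]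
        · rcases eq_or_ne j a with rfl | hja
          · have hib2 : i ≠ b := (hp.trans hab).ne
            simp [Fmap, hia, hib2, hab.ne, hab.ne', lt_asymm hp, lt_asymm hab,
              Equiv.swap_apply_of_ne_of_ne]
          · simp [Fmap, hia, hib, hja, hjb, Equiv.swap_apply_of_ne_of_ne]

lemma Fmap_mem {n : ℕ} (v : Equiv.Perm (Fin n)) {a b : Fin n} (hab : a < b)
    (hv : v a < v b) {p : Fin n × Fin n} (hp1 : p.1 < p.2) (hp2 : v p.2 < v p.1) :
    (Fmap a b p).1 < (Fmap a b p).2 ∧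
      (v * Equiv.swap a b) (Fmap a b p).2 < (v * Equiv.swap a b) (Fmap a b p).1 ∧
      Fmap a b p ≠ (a, b) := by
  obtain ⟨i, j⟩ := p
  simp only at hp1 hp2
  by_cases h1 : (i = a ∧ j < b) ∨ (j = b ∧ a < i)
  · have himage : Fmap a b (i, j) = (i, j) := by
      simp only [Fmap]; exact if_pos h1
    rw [himage]
    rcases h1 with ⟨rfl, hjb⟩ | ⟨rfl, hai⟩
    · -- p = (i, j) with a = i, j < b
      have hja : j ≠ i := hp1.ne'
      have hjb' : j ≠ b := hjb.ne
      refine ⟨hp1, ?_, ?_⟩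
      · show v (Equiv.swap i b j) < v (Equiv.swap i b i)
        rw [Equiv.swap_apply_left, Equiv.swap_apply_of_ne_of_ne hja hjb']
        exact hp2.trans hv
      · intro heq; rw [Prod.mk.injEq] at heq; exact hjb' heq.2
    · -- p = (i, j) with b = j, a < i
      have hia : i ≠ a := hai.ne'
      have hib : i ≠ j := hp1.ne
      refine ⟨hp1, ?_, ?_⟩
      · show v (Equiv.swap a j j) < v (Equiv.swap a j i)
        rw [Equiv.swap_apply_right, Equiv.swap_apply_of_ne_of_ne hia hib]
        exact hv.trans hp2
      · intro heq; rw [Prod.mk.injEq] at heq; exact hia heq.1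
  · have h1a : i = a → ¬ j < b := fun h h' => h1 (Or.inl ⟨h, h'⟩)
    have h1b : j = b → ¬ a < i := fun h h' => h1 (Or.inr ⟨h, h'⟩)
    have himage : Fmap a b (i, j) = (Equiv.swap a b i, Equiv.swap a b j) := by
      simp only [Fmap]; exact if_neg h1
    rw [himage]
    refine ⟨?_, ?_, ?_⟩
    · -- swap a b i < swap a b j
      show Equiv.swap a b i < Equiv.swap a b j
      rcases eq_or_ne i a with rfl | hia
      · -- a := i
        have hjb : j ≠ b := by rintro rfl; exact absurd hv (not_lt.mpr hp2.le)
        have hbj' : b < j := lt_of_le_of_ne (not_lt.mp (h1a rfl)) (Ne.symm hjb)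
        have hja : j ≠ i := hp1.ne'
        rw [Equiv.swap_apply_left, Equiv.swap_apply_of_ne_of_ne hja hjb]
        exact hbj'
      · rcases eq_or_ne j b with rfl | hjb
        · have hia' : i < a := lt_of_le_of_ne (not_lt.mp (h1b rfl)) hia
          have hib : i ≠ j := hp1.ne
          rw [Equiv.swap_apply_right, Equiv.swap_apply_of_ne_of_ne hia hib]
          exact hia'
        · rcases eq_or_ne i b with rfl | hib
          · -- b := i
            have hja : j ≠ a := (hab.trans hp1).ne'
            rw [Equiv.swap_apply_right, Equiv.swap_apply_of_ne_of_ne hja hjb]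
            exact hab.trans hp1
          · rcases eq_or_ne j a with rfl | hja
            · -- a := j
              have hib2 : i ≠ b := (hp1.trans hab).ne
              rw [Equiv.swap_apply_left, Equiv.swap_apply_of_ne_of_ne hia hib2]
              exact hp1.trans hab
            · rw [Equiv.swap_apply_of_ne_of_ne hia hib, Equiv.swap_apply_of_ne_of_ne hja hjb]
              exact hp1
    · show v (Equiv.swap a b (Equiv.swap a b j)) < v (Equiv.swap a b (Equiv.swap a b i))
      rw [Equiv.swap_apply_self, Equiv.swap_apply_self]
      exact hp2
    · intro heq
      rw [Prod.mk.injEq] at heq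
      have h2 : i = b := by
        have h' := congrArg (Equiv.swap a b) heq.1
        rwa [Equiv.swap_apply_self, Equiv.swap_apply_left] at h'
      have h3 : j = a := by
        have h' := congrArg (Equiv.swap a b) heq.2
        rwa [Equiv.swap_apply_self, Equiv.swap_apply_right] at h'
      rw [h2, h3] at hp1
      exact absurd (hp1.trans hab) (lt_irrefl b)

lemma invLength_lt_of_swap {n : ℕ} (v : Equiv.Perm (Fin n)) {a b : Fin n}
    (hab : a < b) (hv : v a < v b) :
    invLength v < invLength (v * Equiv.swap a b) := by
  classical
  set s : Finset (Fin n × Fin n) :=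
    Finset.univ.filter fun p => p.1 < p.2 ∧ v p.2 < v p.1 with hs
  set t : Finset (Fin n × Fin n) :=
    Finset.univ.filter fun p => p.1 < p.2 ∧ (v * Equiv.swap a b) p.2 < (v * Equiv.swap a b) p.1 with ht
  have habt : (a, b) ∈ t := by
    simp only [ht, Finset.mem_filter, Finset.mem_univ, true_and]
    refine ⟨hab, ?_⟩
    show v (Equiv.swap a b b) < v (Equiv.swap a b a)
    rw [Equiv.swap_apply_left, Equiv.swap_apply_right]
    exact hv
  have hcard : s.card ≤ (t.erase (a, b)).card := by
    apply Finset.card_le_card_of_injOn (Fmap a b)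
    · intro p hp
      simp only [hs, Finset.mem_coe, Finset.mem_filter, Finset.mem_univ, true_and] at hp
      obtain ⟨h2, h3, h4⟩ := Fmap_mem v hab hv hp.1 hp.2
      rw [Finset.mem_coe, Finset.mem_erase]
      refine ⟨h4, ?_⟩
      simp only [ht, Finset.mem_filter, Finset.mem_univ, true_and]
      exact ⟨h2, h3⟩
    · intro p hp q hq hpq
      simp only [hs, Finset.coe_filter, Set.mem_setOf_eq] at hp hq
      rw [← Fmap_invol hab hp.2.1, hpq, Fmap_invol hab hq.2.1]
  have := Finset.card_erase_of_mem habt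
  have ht1 : 1 ≤ t.card := Finset.card_pos.mpr ⟨(a, b), habt⟩
  show s.card < t.card
  omega

lemma lt_of_invLength_lt {n : ℕ} {v : Equiv.Perm (Fin n)} {a b : Fin n} (hab : a < b)
    (hlen : invLength v < invLength (v * Equiv.swap a b)) : v a < v b := by
  by_contra hcon
  have hne : v b ≠ v a := fun h => hab.ne (v.injective h.symm)
  have hlt : v b < v a := lt_of_le_of_ne (not_lt.mp hcon) hne
  set v' := v * Equiv.swap a b with hv'
  have ha' : v' a = v b := by rw [hv']; show v (Equiv.swap a b a) = v b; rw [Equiv.swap_apply_left]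
  have hb' : v' b = v a := by rw [hv']; show v (Equiv.swap a b b) = v a; rw [Equiv.swap_apply_right]
  have h2 : invLength v' < invLength (v' * Equiv.swap a b) :=
    invLength_lt_of_swap v' hab (by rw [ha', hb']; exact hlt)
  rw [hv', mul_assoc, Equiv.swap_mul_self, mul_one] at h2
  rw [hv'] at hlen
  exact absurd h2 (lt_asymm hlen)

lemma chainProd_append {n : ℕ} (w : Equiv.Perm (Fin n)) (L M : List (Fin n × Fin n)) :
    chainProd w (L ++ M) = chainProd (chainProd w L) M := by
  simp [chainProd, mul_assoc]

lemma chainProd_singleton {n : ℕ} (w : Equiv.Perm (Fin n)) (p : Fin n × Fin n) :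
    chainProd w [p] = w * Equiv.swap p.1 p.2 := by
  simp [chainProd]

lemma chainProd_apply_fixed {n : ℕ} (w : Equiv.Perm (Fin n)) (L : List (Fin n × Fin n))
    (x : Fin n) (h : ∀ p ∈ L, p.1 ≠ x ∧ p.2 ≠ x) : chainProd w L x = w x := by
  have : (L.map fun p => Equiv.swap p.1 p.2).prod x = x := by
    induction L with
    | nil => simp
    | cons q L ih =>
      have hq := h q (List.mem_cons_self (a := q) (l := L))
      rw [List.map_cons, List.prod_cons, Equiv.Perm.mul_apply,
        ih fun p hp => h p (List.mem_cons_of_mem q hp),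
        Equiv.swap_apply_of_ne_of_ne (Ne.symm hq.1) (Ne.symm hq.2)]
  show w ((L.map fun p => Equiv.swap p.1 p.2).prod x) = w x
  rw [this]

theorem stmt3' (n m : ℕ) (hn : 1 ≤ n) (hm : 1 ≤ m) (hmn : m < n)
    (w u : Equiv.Perm (Fin n))
    (L : List (Fin n × Fin n))
    (hpairs : ∀ p ∈ L, (p.1 : ℕ) < m ∧ m ≤ (p.2 : ℕ))
    (hu : u = chainProd w L)
    (hlen : ∀ i, i ≤ L.length → invLength (chainProd w (L.take i)) = invLength w + i)
    (hnd : (L.map Prod.snd).Nodup) :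
    ((Finset.univ.filter fun j : Fin n => (j : ℕ) < m).image w ∪
      (Finset.univ.filter fun b : Fin n => m ≤ (b : ℕ) ∧ u b < w b).image w).card
      = m + (invLength u - invLength w) := by
  classical
  have key1 : ∀ k (hk : k < L.length),
      u (L.get ⟨k, hk⟩).2 < w (L.get ⟨k, hk⟩).2 := by
    intro k hk
    set p := L.get ⟨k, hk⟩ with hpdef
    have hpmem : p ∈ L := List.get_mem L ⟨k, hk⟩
    obtain ⟨ha, hb⟩ := hpairs p hpmem
    have hab : p.1 < p.2 := by rw [Fin.lt_def]; omega
    have hsplit : L = L.take k ++ p :: L.drop (k + 1) := by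
      conv_lhs => rw [← List.take_append_drop k L]
      rw [List.drop_eq_getElem_cons hk, hpdef, List.get_eq_getElem]
    have hnd2 : ((L.take k).map Prod.snd ++ p.2 :: (L.drop (k+1)).map Prod.snd).Nodup := by
      rw [← List.map_cons, ← List.map_append, ← hsplit]; exact hnd
    obtain ⟨-, hnd3, hdisj⟩ := List.nodup_append.mp hnd2
    have hb_not : p.2 ∉ (L.drop (k+1)).map Prod.snd := (List.nodup_cons.mp hnd3).1
    have h_take : ∀ q ∈ L.take k, q.1 ≠ p.2 ∧ q.2 ≠ p.2 := by
      intro q hq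
      obtain ⟨hq1, hq2⟩ := hpairs q (List.take_subset k L hq)
      refine ⟨fun hc => by rw [hc] at hq1; omega, fun hc => ?_⟩
      exact hdisj _ (List.mem_map_of_mem (f := Prod.snd) hq) _ (List.mem_cons_self (a := p.2)) hc
    have h_drop : ∀ q ∈ L.drop (k+1), q.1 ≠ p.2 ∧ q.2 ≠ p.2 := by
      intro q hq
      obtain ⟨hq1, hq2⟩ := hpairs q (List.drop_subset (k+1) L hq)
      refine ⟨fun hc => by rw [hc] at hq1; omega, fun hc => ?_⟩
      exact hb_not (hc ▸ List.mem_map_of_mem (f := Prod.snd) hq)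
    have hwb : chainProd w (L.take k) p.2 = w p.2 := chainProd_apply_fixed w _ _ h_take
    have htake1 : L.take (k+1) = L.take k ++ [p] := by
      rw [hpdef, List.get_eq_getElem, ← List.concat_eq_append, List.take_concat_get]
    have hub : u p.2 = chainProd w (L.take k) p.1 := by
      have h2 : u = chainProd (chainProd w (L.take (k+1))) (L.drop (k+1)) := by
        rw [hu, ← chainProd_append, List.take_append_drop]
      rw [h2, chainProd_apply_fixed _ _ _ h_drop, htake1, chainProd_append, chainProd_singleton]
      show chainProd w (L.take k) (Equiv.swap p.1 p.2 p.2) = _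
      rw [Equiv.swap_apply_right]
    have hstep : invLength (chainProd w (L.take k)) <
        invLength (chainProd w (L.take k) * Equiv.swap p.1 p.2) := by
      have e1 := hlen k hk.le
      have e2 := hlen (k+1) hk
      rw [htake1, chainProd_append, chainProd_singleton] at e2
      omega
    have hvab := lt_of_invLength_lt hab hstep
    rw [hub, ← hwb]
    exact hvab
  have key2 : ∀ b : Fin n, m ≤ (b : ℕ) → b ∉ L.map Prod.snd → u b = w b := by
    intro b hmb hbL
    rw [hu]
    apply chainProd_apply_fixed
    intro q hq
    obtain ⟨hq1, hq2⟩ := hpairs q hq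
    exact ⟨fun hc => by rw [hc] at hq1; omega,
      fun hc => hbL (hc ▸ List.mem_map_of_mem (f := Prod.snd) hq)⟩
  have hset : (Finset.univ.filter fun b : Fin n => m ≤ (b : ℕ) ∧ u b < w b)
      = (L.map Prod.snd).toFinset := by
    ext b
    simp only [Finset.mem_filter, Finset.mem_univ, true_and, List.mem_toFinset]
    constructor
    · rintro ⟨hmb, hlt⟩
      by_contra hbL
      rw [key2 b hmb hbL] at hlt
      exact lt_irrefl _ hlt
    · intro hb
      obtain ⟨q, hqL, rfl⟩ := List.mem_map.mp hb
      obtain ⟨⟨k, hk⟩, rfl⟩ := List.mem_iff_get.mp hqL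
      exact ⟨(hpairs _ hqL).2, key1 k hk⟩
  have hcard1 : (Finset.univ.filter fun j : Fin n => (j : ℕ) < m).card = m := by
    have heq : (Finset.univ.filter fun j : Fin n => (j : ℕ) < m)
        = Finset.map (Fin.castLEEmb hmn.le) Finset.univ := by
      ext x
      simp only [Finset.mem_filter, Finset.mem_univ, true_and, Finset.mem_map]
      constructor
      · intro hx
        exact ⟨⟨(x : ℕ), hx⟩, by ext; simp [Fin.castLEEmb]⟩
      · rintro ⟨y, rfl⟩
        exact y.isLt
    rw [heq, Finset.card_map, Finset.card_univ, Fintype.card_fin]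
  have hdisj0 : Disjoint (Finset.univ.filter fun j : Fin n => (j : ℕ) < m)
      ((L.map Prod.snd).toFinset) := by
    rw [Finset.disjoint_left]
    intro x hx hx2
    simp only [Finset.mem_filter, Finset.mem_univ, true_and] at hx
    rw [List.mem_toFinset] at hx2
    obtain ⟨q, hqL, rfl⟩ := List.mem_map.mp hx2
    have := (hpairs q hqL).2
    omega
  have hdisj : Disjoint ((Finset.univ.filter fun j : Fin n => (j : ℕ) < m).image w)
      (((L.map Prod.snd).toFinset).image w) :=
    (Finset.disjoint_image w.injective).mpr hdisj0
  have hfin : invLength u = invLength w + L.length := by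
    have h3 := hlen L.length le_rfl
    rwa [List.take_length, ← hu] at h3
  rw [hset, Finset.card_union_of_disjoint hdisj,
    Finset.card_image_of_injective _ w.injective,
    Finset.card_image_of_injective _ w.injective, hcard1,
    List.toFinset_card_of_nodup hnd, List.length_map]
  omega

/-- if `w →^{r_m} u` then
`{w(1),…,w(m)} ∪ {w(b) : m < b ≤ n, w(b) > u(b)}` has `m + ℓ(u) − ℓ(w)` elements. -/
theorem stmt3 (n m : ℕ) (hn : 1 ≤ n) (hm : 1 ≤ m) (hmn : m < n)
    (w u : Equiv.Perm (Fin n)) (h : rmRel m w u) :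
    ((Finset.univ.filter fun j : Fin n => (j : ℕ) < m).image w ∪
      (Finset.univ.filter fun b : Fin n => m ≤ (b : ℕ) ∧ u b < w b).image w).card
      = m + (invLength u - invLength w) := by
  obtain ⟨L, ⟨hpairs, hu, hlen⟩, hnd⟩ := h
  exact stmt3' n m hn hm hmn w u L hpairs hu hlen hnd
end

section
/- Let n ≥ 1, let 1 ≤ m < n, and let w, u be permutations of {1,2,…,n} such that w →^{r_m} u, witnessed by pairs (a_1,b_1),…,(a_s,b_s) with s = ℓ(u) − ℓ(w), a_i ≤ m < b_i, b_1,…,b_s pairwise distinct, u = wτ_{a_1b_1}⋯τ_{a_sb_s}, and ℓ(wτ_{a_1b_1}⋯τ_{a_ib_i}) = ℓ(w) + i for all i. Then for each index i with 1 ≤ i ≤ s, letting k = max{ j : 1 ≤ j ≤ s and a_j = a_i }, one has u(a_i) = w(b_k) and w(b_k) > u(b_k). -/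
lemma prodSwaps_fix {n : ℕ} (l : List (Fin n × Fin n)) (x : Fin n)
    (h : ∀ p ∈ l, p.1 ≠ x ∧ p.2 ≠ x) :
    (l.map fun p => Equiv.swap p.1 p.2).prod x = x := by
  induction l with
  | nil => simp
  | cons p l ih =>
    simp only [List.map_cons, List.prod_cons, Equiv.Perm.mul_apply]
    rw [ih (fun q hq => h q (List.mem_cons_of_mem _ hq))]
    exact Equiv.swap_apply_of_ne_of_ne (Ne.symm (h p (List.mem_cons_self)).1)
      (Ne.symm (h p (List.mem_cons_self)).2)

lemma invLength_swap_lt {n : ℕ} (v : Equiv.Perm (Fin n)) (a b : Fin n)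
    (hab : a < b) (hv : v b < v a) :
    invLength (v * Equiv.swap a b) < invLength v := by
  classical
  have hne : a ≠ b := ne_of_lt hab
  set τ := Equiv.swap a b with hτ
  have hτa : τ a = b := Equiv.swap_apply_left a b
  have hτb : τ b = a := Equiv.swap_apply_right a b
  have hττ : ∀ x, τ (τ x) = x := fun x => Equiv.swap_apply_self a b x
  set S := Finset.univ.filter
    (fun p : Fin n × Fin n => p.1 < p.2 ∧ (v * τ) p.2 < (v * τ) p.1) with hS
  set T := Finset.univ.filter
    (fun p : Fin n × Fin n => p.1 < p.2 ∧ v p.2 < v p.1) with hT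
  have habT : (a, b) ∈ T := by simp [hT, hab, hv]
  have key : S.card ≤ (T.erase (a,b)).card := by
    apply Finset.card_le_card_of_injOn (fun p => if τ p.1 < τ p.2 then (τ p.1, τ p.2) else p)
    · intro p hp
      replace hp := (Finset.mem_filter.1 (show p ∈ S from hp)).2
      simp only [hS, Finset.mem_coe, Finset.mem_filter, Finset.mem_univ, true_and,
        Equiv.Perm.mul_apply] at hp
      obtain ⟨h12, hval⟩ := hp
      rw [Finset.mem_coe, Finset.mem_erase]
      beta_reduce
      by_cases hcase : τ p.1 < τ p.2
      · rw [if_pos hcase]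
        refine ⟨?_, by simp [hT, hcase, hval]⟩
        intro heq
        have h1 : τ p.1 = a := congrArg Prod.fst heq
        have h2 : τ p.2 = b := congrArg Prod.snd heq
        have hp1 : p.1 = b := by rw [← hτa, ← h1, hττ]
        have hp2 : p.2 = a := by rw [← hτb, ← h2, hττ]
        rw [hp1, hp2] at h12
        exact absurd h12 (not_lt.2 hab.le)
      · rw [if_neg hcase]
        by_cases h1a : p.1 = a
        · by_cases h2b : p.2 = b
          · exfalso
            rw [h1a, h2b, hτa, hτb] at hval
            exact absurd hval (not_lt.2 (le_of_lt hv))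
          · have h2a : p.2 ≠ a := by
              intro h; rw [h1a, h] at h12; exact lt_irrefl _ h12
            have hτp2 : τ p.2 = p.2 := Equiv.swap_apply_of_ne_of_ne h2a h2b
            rw [h1a, hτa, hτp2] at hval
            refine ⟨?_, ?_⟩
            · intro heq; exact h2b (congrArg Prod.snd heq)
            · simp only [hT, Finset.mem_filter, Finset.mem_univ, true_and]
              exact ⟨h12, lt_trans hval (by rw [h1a]; exact hv)⟩
        · by_cases h2b : p.2 = b
          · have h1b : p.1 ≠ b := by
              intro h; rw [h, h2b] at h12; exact lt_irrefl _ h12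
            have hτp1 : τ p.1 = p.1 := Equiv.swap_apply_of_ne_of_ne h1a h1b
            rw [h2b, hτb, hτp1] at hval
            refine ⟨?_, ?_⟩
            · intro heq; exact h1a (congrArg Prod.fst heq)
            · simp only [hT, Finset.mem_filter, Finset.mem_univ, true_and]
              exact ⟨h12, by rw [h2b]; exact lt_trans hv hval⟩
          · exfalso; apply hcase
            by_cases h1b : p.1 = b
            · have h2a : p.2 ≠ a := fun h => absurd (h ▸ h1b ▸ h12) (not_lt.2 (le_of_lt hab))
              rw [h1b, hτb, Equiv.swap_apply_of_ne_of_ne h2a h2b]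
              exact lt_trans hab (h1b ▸ h12)
            · by_cases h2a : p.2 = a
              · rw [h2a, hτa, Equiv.swap_apply_of_ne_of_ne h1a h1b]
                exact lt_trans (h2a ▸ h12) hab
              · rw [Equiv.swap_apply_of_ne_of_ne h1a h1b,
                  Equiv.swap_apply_of_ne_of_ne h2a h2b]
                exact h12
    · intro p hp q hq heq
      dsimp only at heq
      simp only [hS, Finset.mem_coe, Finset.mem_filter, Finset.mem_univ, true_and] at hp hq
      by_cases hcp : τ p.1 < τ p.2 <;> by_cases hcq : τ q.1 < τ q.2
      · rw [if_pos hcp, if_pos hcq] at heq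
        have h1 : τ p.1 = τ q.1 := congrArg Prod.fst heq
        have h2 : τ p.2 = τ q.2 := congrArg Prod.snd heq
        exact Prod.ext (τ.injective h1) (τ.injective h2)
      · rw [if_pos hcp, if_neg hcq] at heq
        exfalso; apply hcq
        rw [← heq]
        simpa [hττ] using hp.1
      · rw [if_neg hcp, if_pos hcq] at heq
        exfalso; apply hcp
        rw [heq]
        simpa [hττ] using hq.1
      · rwa [if_neg hcp, if_neg hcq] at heq
  calc invLength (v * τ) = S.card := rfl
    _ ≤ (T.erase (a,b)).card := key
    _ < T.card := Finset.card_erase_lt_of_mem habT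
    _ = invLength v := rfl

/-- given a chain with distinct `bᵢ` witnessing `w →^{r_m} u`,
for each index `i`, letting `k` be the largest index with `a_k = a_i`,
one has `u(a_i) = w(b_k)` and `w(b_k) > u(b_k)`. -/
theorem stmt4 (n m : ℕ) (hn : 1 ≤ n) (hm : 1 ≤ m) (hmn : m < n)
    (w u : Equiv.Perm (Fin n)) (L : List (Fin n × Fin n))
    (hL : IsMChain m w u L) (hb : (L.map Prod.snd).Nodup) :
    ∀ i : Fin L.length, ∃ k : Fin L.length,
      (L.get k).1 = (L.get i).1 ∧
      (∀ j : Fin L.length, (L.get j).1 = (L.get i).1 → j ≤ k) ∧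
      u (L.get i).1 = w (L.get k).2 ∧
      u (L.get k).2 < w (L.get k).2 := by
  classical
  obtain ⟨hab, huv, hlen⟩ := hL
  intro i
  set a := (L.get i).1 with ha
  set S := Finset.univ.filter (fun j : Fin L.length => (L.get j).1 = a) with hSdef
  have hiS : i ∈ S := Finset.mem_filter.2 ⟨Finset.mem_univ _, rfl⟩
  have hSne : S.Nonempty := ⟨i, hiS⟩
  set k := S.max' hSne with hkdef
  have hk1 : (L.get k).1 = a := (Finset.mem_filter.1 (S.max'_mem hSne)).2
  have hk2 : ∀ j : Fin L.length, (L.get j).1 = a → j ≤ k := fun j hj =>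
    S.le_max' j (Finset.mem_filter.2 ⟨Finset.mem_univ _, hj⟩)
  set kk := (k : ℕ) with hkk'
  have hkk : kk < L.length := k.isLt
  set b := (L.get k).2 with hbdef
  -- snd injectivity from nodup
  have hsnd : ∀ (j1 j2 : ℕ) (h1 : j1 < L.length) (h2 : j2 < L.length),
      j1 ≠ j2 → (L[j1]).2 ≠ (L[j2]).2 := by
    intro j1 j2 h1 h2 hne heq
    apply hne
    have h1' : j1 < (L.map Prod.snd).length := by simpa
    have h2' : j2 < (L.map Prod.snd).length := by simpa
    have : (L.map Prod.snd)[j1]'h1' = (L.map Prod.snd)[j2]'h2' := by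
      simpa [List.getElem_map] using heq
    exact (List.Nodup.getElem_inj_iff hb).1 this
  have hmemi : L.get i ∈ L := by rw [List.get_eq_getElem]; exact List.getElem_mem _
  have hmemk : L.get k ∈ L := by rw [List.get_eq_getElem]; exact List.getElem_mem _
  have ham : (a : ℕ) < m := (hab _ hmemi).1
  have hmb : m ≤ (b : ℕ) := (hab _ hmemk).2
  have hab' : a < b := by
    rw [Fin.lt_def]; omega
  -- product decomposition
  set f : Fin n × Fin n → Equiv.Perm (Fin n) := fun p => Equiv.swap p.1 p.2 with hf
  have hgetk : L.get k = L[kk]'hkk := by rw [List.get_eq_getElem]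
  have hLdecomp : L = L.take kk ++ L.get k :: L.drop (kk+1) := by
    conv_lhs => rw [← List.take_append_drop kk L, List.drop_eq_getElem_cons hkk]
    rw [hgetk]
  set P1 := ((L.take kk).map f).prod with hP1def
  set P2 := ((L.drop (kk+1)).map f).prod with hP2def
  have hsplit : (L.map f).prod = P1 * (f (L.get k) * P2) := by
    conv_lhs => rw [hLdecomp, List.map_append, List.prod_append, List.map_cons,
      List.prod_cons]
  have hux : ∀ x, u x = w (P1 (Equiv.swap (L.get k).1 (L.get k).2 (P2 x))) := by
    intro x
    rw [huv]
    show w ((L.map f).prod x) = _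
    rw [hsplit]
    simp [Equiv.Perm.mul_apply, hf]
  -- P2 fixes a
  have hP2a : P2 a = a := by
    apply prodSwaps_fix
    intro p hp
    obtain ⟨j, hj, hpj⟩ := List.mem_iff_getElem.1 hp
    have hjL : kk + 1 + j < L.length := by
      have := hj; simp [List.length_drop] at this; omega
    have hpj' : p = L[kk+1+j]'hjL := by
      rw [← hpj, List.getElem_drop]
    constructor
    · intro h
      have hLj : (L.get ⟨kk+1+j, hjL⟩).1 = a := by
        rw [List.get_eq_getElem, ← hpj', h]
      have := hk2 ⟨kk+1+j, hjL⟩ hLj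
      rw [Fin.le_def] at this
      simp at this
      omega
    · intro h
      have := (hab p (List.mem_of_mem_drop hp)).2
      rw [h] at this
      omega
  -- P2 fixes b
  have hP2b : P2 b = b := by
    apply prodSwaps_fix
    intro p hp
    obtain ⟨j, hj, hpj⟩ := List.mem_iff_getElem.1 hp
    have hjL : kk + 1 + j < L.length := by
      have := hj; simp [List.length_drop] at this; omega
    have hpj' : p = L[kk+1+j]'hjL := by
      rw [← hpj, List.getElem_drop]
    constructor
    · intro h
      have := (hab p (List.mem_of_mem_drop hp)).1
      rw [h] at this
      omega
    · intro h
      apply hsnd (kk+1+j) kk hjL hkk (by omega)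
      rw [← hpj', h, hbdef, hgetk]
  -- P1 fixes b
  have hP1b : P1 b = b := by
    apply prodSwaps_fix
    intro p hp
    obtain ⟨j, hj, hpj⟩ := List.mem_iff_getElem.1 hp
    have hjk : j < kk := by
      have := hj; simp [List.length_take] at this; omega
    have hjL : j < L.length := lt_trans hjk hkk
    have hpj' : p = L[j]'hjL := by
      rw [← hpj, List.getElem_take]
    constructor
    · intro h
      have := (hab p (List.mem_of_mem_take hp)).1
      rw [h] at this
      omega
    · intro h
      apply hsnd j kk hjL hkk (by omega)
      rw [← hpj', h, hbdef, hgetk]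
  -- third conjunct: u a = w b
  have hua : u a = w b := by
    rw [hux, hP2a, hk1, Equiv.swap_apply_left, hP1b]
  -- V := chainProd w (L.take kk)
  set V := chainProd w (L.take kk) with hVdef
  have hVx : ∀ x, V x = w (P1 x) := fun x => rfl
  have hub : u b = V a := by
    rw [hux, hP2b, ← hbdef, hk1, Equiv.swap_apply_right, hVx]
  have hVb : V b = w b := by rw [hVx, hP1b]
  -- length step
  have htake1 : L.take (kk+1) = L.take kk ++ [L.get k] := by
    rw [← List.take_concat_get hkk, List.concat_eq_append, hgetk]
  have htk : chainProd w (L.take (kk+1)) = V * Equiv.swap a b := by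
    show w * (List.map f (L.take (kk+1))).prod = _
    rw [htake1, List.map_append, List.prod_append, List.map_cons, List.map_nil,
      List.prod_cons, List.prod_nil, mul_one, ← mul_assoc]
    have : f (L.get k) = Equiv.swap a b := by rw [hf]; dsimp only; rw [hk1, ← hbdef]
    rw [this]
    rfl
  have hlen1 : invLength V = invLength w + kk := hlen kk (le_of_lt hkk)
  have hlen2 : invLength (V * Equiv.swap a b) = invLength w + (kk+1) := by
    rw [← htk]; exact hlen (kk+1) hkk
  have hVab : V a < V b := by
    rcases lt_trichotomy (V a) (V b) with h | h | h
    · exact h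
    · exact absurd (V.injective h) (ne_of_lt hab')
    · have := invLength_swap_lt V a b hab' h
      omega
  exact ⟨k, hk1, hk2, hua, by rw [hub, ← hVb]; exact hVab⟩
end

section
/- Let n ≥ 1, let 1 ≤ m < n, and let w, u be permutations of {1,2,…,n} with w →^{r_m} u. Then for every j with 1 ≤ j ≤ m, the value u(j) lies in the set {w(1), w(2), …, w(m)} ∪ {w(b) : m < b ≤ n and w(b) > u(b)}. -/
lemma invLength_mul_swap {n : ℕ} (v : Equiv.Perm (Fin n)) (a b : Fin n) :
    invLength (v * Equiv.swap a b) =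
      (Finset.univ.filter fun p : Fin n × Fin n =>
        Equiv.swap a b p.1 < Equiv.swap a b p.2 ∧ v p.2 < v p.1).card := by
  unfold invLength
  apply Finset.card_equiv (Equiv.prodCongr (Equiv.swap a b) (Equiv.swap a b))
  intro p
  simp [Equiv.swap_apply_self]
  exact Finset.mem_filter.trans (by simp)

lemma adj_asc {n : ℕ} (v : Equiv.Perm (Fin n)) (k k' : Fin n) (hkk' : (k' : ℕ) = (k : ℕ) + 1)
    (h : v k < v k') :
    invLength (v * Equiv.swap k k') = invLength v + 1 := by
  have hk : k < k' := Fin.lt_def.mpr (by omega)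
  have hkne : k ≠ k' := ne_of_lt hk
  rw [invLength_mul_swap]
  have hkey : (Finset.univ.filter fun p : Fin n × Fin n =>
      Equiv.swap k k' p.1 < Equiv.swap k k' p.2 ∧ v p.2 < v p.1) =
      insert (k', k) (Finset.univ.filter fun p : Fin n × Fin n =>
        p.1 < p.2 ∧ v p.2 < v p.1) := by
    ext ⟨i, j⟩
    simp only [Finset.mem_filter, Finset.mem_insert, Finset.mem_univ, true_and, Prod.mk.injEq]
    rcases eq_or_ne i k with hik | hik
    · rw [hik, Equiv.swap_apply_left]
      rcases eq_or_ne j k' with hjk' | hjk'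
      · rw [hjk', Equiv.swap_apply_right]
        constructor
        · rintro ⟨-, hcon⟩; exact absurd hcon (lt_asymm h)
        · rintro (⟨he, -⟩ | ⟨-, hcon⟩)
          · exact absurd he hkne
          · exact absurd hcon (lt_asymm h)
      · rcases eq_or_ne j k with hjk | hjk
        · rw [hjk, Equiv.swap_apply_left]
          constructor
          · rintro ⟨hcon, -⟩; exact absurd hcon (lt_irrefl _)
          · rintro (⟨he, -⟩ | ⟨hcon, -⟩)
            · exact absurd he hkne
            · exact absurd hcon (lt_irrefl _)
        · rw [Equiv.swap_apply_of_ne_of_ne hjk hjk']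
          have hj1 : (j : ℕ) ≠ k := fun hh => hjk (Fin.ext hh)
          have hj2 : (j : ℕ) ≠ k' := fun hh => hjk' (Fin.ext hh)
          constructor
          · rintro ⟨h1, h2⟩
            right
            exact ⟨by rw [Fin.lt_def] at h1 ⊢; omega, h2⟩
          · rintro (⟨he, -⟩ | ⟨h1, h2⟩)
            · exact absurd he hkne
            · exact ⟨by rw [Fin.lt_def] at h1 ⊢; omega, h2⟩
    · rcases eq_or_ne i k' with hik' | hik'
      · rw [hik', Equiv.swap_apply_right]
        rcases eq_or_ne j k with hjk | hjk
        · rw [hjk, Equiv.swap_apply_left]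
          constructor
          · rintro -; left; exact ⟨rfl, rfl⟩
          · rintro -; exact ⟨hk, h⟩
        · rcases eq_or_ne j k' with hjk' | hjk'
          · rw [hjk', Equiv.swap_apply_right]
            constructor
            · rintro ⟨hcon, -⟩; exact absurd hcon (lt_irrefl _)
            · rintro (⟨-, he⟩ | ⟨hcon, -⟩)
              · exact absurd he.symm hkne
              · exact absurd hcon (lt_irrefl _)
          · rw [Equiv.swap_apply_of_ne_of_ne hjk hjk']
            have hj1 : (j : ℕ) ≠ k := fun hh => hjk (Fin.ext hh)
            have hj2 : (j : ℕ) ≠ k' := fun hh => hjk' (Fin.ext hh)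
            constructor
            · rintro ⟨h1, h2⟩
              right
              exact ⟨by rw [Fin.lt_def] at h1 ⊢; omega, h2⟩
            · rintro (⟨-, he⟩ | ⟨h1, h2⟩)
              · exact absurd he hjk
              · exact ⟨by rw [Fin.lt_def] at h1 ⊢; omega, h2⟩
      · rw [Equiv.swap_apply_of_ne_of_ne hik hik']
        have hi1 : (i : ℕ) ≠ k := fun hh => hik (Fin.ext hh)
        have hi2 : (i : ℕ) ≠ k' := fun hh => hik' (Fin.ext hh)
        rcases eq_or_ne j k with hjk | hjk
        · rw [hjk, Equiv.swap_apply_left]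
          constructor
          · rintro ⟨h1, h2⟩
            right
            exact ⟨by rw [Fin.lt_def] at h1 ⊢; omega, h2⟩
          · rintro (⟨he, -⟩ | ⟨h1, h2⟩)
            · exact absurd he hik'
            · exact ⟨by rw [Fin.lt_def] at h1 ⊢; omega, h2⟩
        · rcases eq_or_ne j k' with hjk' | hjk'
          · rw [hjk', Equiv.swap_apply_right]
            constructor
            · rintro ⟨h1, h2⟩
              right
              exact ⟨by rw [Fin.lt_def] at h1 ⊢; omega, h2⟩
            · rintro (⟨he, -⟩ | ⟨h1, h2⟩)
              · exact absurd he hik'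
              · exact ⟨by rw [Fin.lt_def] at h1 ⊢; omega, h2⟩
          · rw [Equiv.swap_apply_of_ne_of_ne hjk hjk']
            constructor
            · rintro ⟨h1, h2⟩; right; exact ⟨h1, h2⟩
            · rintro (⟨he, -⟩ | hr)
              · exact absurd he hik'
              · exact hr
  rw [hkey, Finset.card_insert_of_notMem]
  · rfl
  · simp only [Finset.mem_filter, Finset.mem_univ, true_and, not_and]
    intro hlt
    rw [Fin.lt_def] at hlt
    omega

lemma adj_desc {n : ℕ} (v : Equiv.Perm (Fin n)) (k k' : Fin n) (hkk' : (k' : ℕ) = (k : ℕ) + 1)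
    (h : v k' < v k) :
    invLength v = invLength (v * Equiv.swap k k') + 1 := by
  have := adj_asc (v * Equiv.swap k k') k k' hkk' (by
    simp [Equiv.Perm.mul_apply, Equiv.swap_apply_left, Equiv.swap_apply_right, h])
  rwa [mul_assoc, Equiv.swap_mul_self, mul_one] at this

lemma swap_desc_le {n : ℕ} : ∀ d (v : Equiv.Perm (Fin n)) (a b : Fin n),
    (b : ℕ) - (a : ℕ) = d → a < b → v b < v a →
    invLength (v * Equiv.swap a b) ≤ invLength v := by
  intro d
  induction d with
  | zero =>
    intro v a b hd hab _
    exfalso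
    have : (a : ℕ) < b := Fin.lt_def.mp hab
    omega
  | succ d ih =>
    intro v a b hd hab hv
    have hab' : (a : ℕ) < (b : ℕ) := Fin.lt_def.mp hab
    by_cases hd0 : d = 0
    · have hb : (b : ℕ) = (a : ℕ) + 1 := by omega
      have := adj_desc v a b hb hv
      omega
    · have hcn : (b : ℕ) - 1 < n := lt_trans (by omega) b.isLt
      set c : Fin n := ⟨(b : ℕ) - 1, hcn⟩ with hc
      have hcv : (c : ℕ) = (b : ℕ) - 1 := rfl
      have hac : (a : ℕ) < (c : ℕ) := by omega
      have hcb : (c : ℕ) + 1 = (b : ℕ) := by omega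
      have hacne : a ≠ c := fun h' => by rw [h'] at hac; omega
      have habne : a ≠ b := ne_of_lt hab
      have hcbne : c ≠ b := fun h' => by rw [h'] at hcb; omega
      have hswap : Equiv.swap c b * Equiv.swap a c * Equiv.swap c b = Equiv.swap a b := by
        have := Equiv.swap_mul_swap_mul_swap (x := a) (y := c) (z := b) hacne habne
        rw [this, Equiv.swap_comm]
      have hexp : v * Equiv.swap a b =
          ((v * Equiv.swap c b) * Equiv.swap a c) * Equiv.swap c b := by
        rw [mul_assoc, mul_assoc, ← mul_assoc (Equiv.swap c b), hswap]
      set v1 := v * Equiv.swap c b with hv1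
      have hv1a : v1 a = v a := by
        simp [hv1, Equiv.Perm.mul_apply, Equiv.swap_apply_of_ne_of_ne hacne habne]
      have hv1c : v1 c = v b := by
        simp [hv1, Equiv.Perm.mul_apply, Equiv.swap_apply_left]
      have hv1b : v1 b = v c := by
        simp [hv1, Equiv.Perm.mul_apply, Equiv.swap_apply_right]
      set v2 := v1 * Equiv.swap a c with hv2
      have h2 : invLength v2 ≤ invLength v1 := by
        apply ih v1 a c (by omega) (Fin.lt_def.mpr hac) (by rw [hv1a, hv1c]; exact hv)
      have hv2c : v2 c = v a := by
        simp [hv2, Equiv.Perm.mul_apply, Equiv.swap_apply_right, hv1a]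
      have hv2b : v2 b = v c := by
        rw [hv2, Equiv.Perm.mul_apply,
          Equiv.swap_apply_of_ne_of_ne (Ne.symm habne) (Ne.symm hcbne), hv1b]
      have hvcb : v c ≠ v b := fun h' => hcbne (v.injective h')
      have hvca : v c ≠ v a := fun h' => (Ne.symm hacne) (v.injective h')
      rw [hexp]
      rcases lt_or_gt_of_ne hvcb with hzy | hzy
      · have e1 : invLength v1 = invLength v + 1 := adj_asc v c b (by omega) hzy
        have hza : v c < v a := lt_trans hzy hv
        have e3 : invLength v2 = invLength (v2 * Equiv.swap c b) + 1 :=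
          adj_desc v2 c b (by omega) (by rw [hv2c, hv2b]; exact hza)
        omega
      · have e1 : invLength v = invLength v1 + 1 := adj_desc v c b (by omega) hzy
        rcases lt_or_gt_of_ne hvca with hza | hza
        · have e3 : invLength v2 = invLength (v2 * Equiv.swap c b) + 1 :=
            adj_desc v2 c b (by omega) (by rw [hv2c, hv2b]; exact hza)
          omega
        · have e3 : invLength (v2 * Equiv.swap c b) = invLength v2 + 1 :=
            adj_asc v2 c b (by omega) (by rw [hv2c, hv2b]; exact hza)
          omega

lemma asc_of_len {n : ℕ} (v : Equiv.Perm (Fin n)) (a b : Fin n) (hab : a < b)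
    (h : invLength (v * Equiv.swap a b) = invLength v + 1) : v a < v b := by
  rcases lt_trichotomy (v a) (v b) with h' | h' | h'
  · exact h'
  · exact absurd (v.injective h') (ne_of_lt hab)
  · have := swap_desc_le ((b : ℕ) - (a : ℕ)) v a b rfl hab h'
    omega

lemma prod_swap_apply_eq_self {n : ℕ} (L : List (Fin n × Fin n)) (x : Fin n)
    (hx : ∀ p ∈ L, x ≠ p.1 ∧ x ≠ p.2) :
    (L.map fun p => Equiv.swap p.1 p.2).prod x = x := by
  induction L with
  | nil => simp
  | cons q L ih =>
    simp only [List.map_cons, List.prod_cons, Equiv.Perm.mul_apply]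
    rw [ih (fun p hp => hx p (List.mem_cons_of_mem q hp))]
    exact Equiv.swap_apply_of_ne_of_ne (hx q ((List.mem_cons_self (a := q) (l := L)))).1
      (hx q ((List.mem_cons_self (a := q) (l := L)))).2

lemma prod_swap_apply_mem {n : ℕ} (L : List (Fin n × Fin n)) (x : Fin n) :
    (L.map fun p => Equiv.swap p.1 p.2).prod x = x ∨
      ∃ p ∈ L, (L.map fun p => Equiv.swap p.1 p.2).prod x = p.1 ∨
        (L.map fun p => Equiv.swap p.1 p.2).prod x = p.2 := by
  induction L with
  | nil => left; simp
  | cons q L ih =>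
    simp only [List.map_cons, List.prod_cons, Equiv.Perm.mul_apply]
    by_cases h1 : (L.map fun p => Equiv.swap p.1 p.2).prod x = q.1
    · right
      exact ⟨q, (List.mem_cons_self (a := q) (l := L)), Or.inr (by rw [h1, Equiv.swap_apply_left])⟩
    by_cases h2 : (L.map fun p => Equiv.swap p.1 p.2).prod x = q.2
    · right
      exact ⟨q, (List.mem_cons_self (a := q) (l := L)), Or.inl (by rw [h2, Equiv.swap_apply_right])⟩
    rw [Equiv.swap_apply_of_ne_of_ne h1 h2]
    rcases ih with h | ⟨p, hp, hp'⟩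
    · left; exact h
    · right; exact ⟨p, List.mem_cons_of_mem _ hp, hp'⟩

lemma chainProd_append_s5 {n : ℕ} (w : Equiv.Perm (Fin n)) (L1 L2 : List (Fin n × Fin n)) :
    chainProd w (L1 ++ L2) =
      chainProd w L1 * (L2.map fun p => Equiv.swap p.1 p.2).prod := by
  simp [chainProd, List.map_append, List.prod_append, mul_assoc]

lemma chainProd_take_succ {n : ℕ} (w : Equiv.Perm (Fin n)) (L : List (Fin n × Fin n))
    (k : ℕ) (hk : k < L.length) :
    chainProd w (L.take (k + 1)) =
      chainProd w (L.take k) * Equiv.swap L[k].1 L[k].2 := by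
  rw [← List.take_concat_get (l := L) (i := k) hk, List.concat_eq_append, chainProd_append_s5]
  simp


/-- if `w →^{r_m} u` then for each `j ≤ m`,
`u(j) ∈ {w(1),…,w(m)} ∪ {w(b) : m < b ≤ n, w(b) > u(b)}`. -/
theorem stmt5 (n m : ℕ) (hn : 1 ≤ n) (hm : 1 ≤ m) (hmn : m < n)
    (w u : Equiv.Perm (Fin n)) (h : rmRel m w u) :
    ∀ j : Fin n, (j : ℕ) < m →
      u j ∈ (Finset.univ.filter fun a : Fin n => (a : ℕ) < m).image w ∪
        (Finset.univ.filter fun b : Fin n => m ≤ (b : ℕ) ∧ u b < w b).image w := by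
  obtain ⟨L, ⟨hL1, hL2, hL3⟩, hnd⟩ := h
  intro j hj
  have huj : u j = w ((L.map fun p => Equiv.swap p.1 p.2).prod j) := by
    rw [hL2]; rfl
  by_cases hsj : (((L.map fun p => Equiv.swap p.1 p.2).prod j : Fin n) : ℕ) < m
  · apply Finset.mem_union_left
    rw [huj]
    exact Finset.mem_image_of_mem w (by simp [hsj])
  · push_neg at hsj
    -- σ j is some p.2 with p ∈ L
    rcases prod_swap_apply_mem L j with h0 | ⟨p, hpL, hp1 | hp2⟩
    · exfalso; rw [h0] at hsj; omega
    · exfalso; have := (hL1 p hpL).1; rw [hp1] at hsj; omega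
    · -- σ j = p.2 =: b
      obtain ⟨k, hk, hLk⟩ := List.mem_iff_getElem.mp hpL
      set a := p.1 with ha
      set b := p.2 with hb
      have ham : (a : ℕ) < m := (hL1 p hpL).1
      have hbm : m ≤ (b : ℕ) := (hL1 p hpL).2
      have hab : a < b := Fin.lt_def.mpr (by omega)
      -- w b = (chainProd w (L.take k)) b
      have hfix_take : ((L.take k).map fun p => Equiv.swap p.1 p.2).prod b = b := by
        apply prod_swap_apply_eq_self
        intro q hq
        constructor
        · intro he
          have := (hL1 q (List.take_subset k L hq)).1
          rw [← he] at this; omega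
        · intro he
          obtain ⟨i, hi, hqi⟩ := List.mem_iff_getElem.mp hq
          have hiL : i < L.length := lt_of_lt_of_le hi (by rw [List.length_take]; omega)
          have hik : i < k := lt_of_lt_of_le hi (by rw [List.length_take]; omega)
          have hLi : L[i] = q := by rw [← List.getElem_take (xs := L) (h := hi)]; exact hqi
          have h1 : (L.map Prod.snd)[i]'(by simpa using hiL) =
              (L.map Prod.snd)[k]'(by simpa using hk) := by
            rw [List.getElem_map, List.getElem_map, hLi, hLk, ← he, hb]
          have := (List.Nodup.getElem_inj_iff hnd).mp h1
          omega
      have hwb : chainProd w (L.take k) b = w b := by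
        show w (((L.take k).map fun p => Equiv.swap p.1 p.2).prod b) = w b
        rw [hfix_take]
      -- u b = (chainProd w (L.take (k+1))) b
      have hfix_drop : ((L.drop (k+1)).map fun p => Equiv.swap p.1 p.2).prod b = b := by
        apply prod_swap_apply_eq_self
        intro q hq
        constructor
        · intro he
          have := (hL1 q (List.drop_subset (k+1) L hq)).1
          rw [← he] at this; omega
        · intro he
          obtain ⟨i, hi, hqi⟩ := List.mem_iff_getElem.mp hq
          have hiL : (k + 1) + i < L.length := by
            have := hi; rw [List.length_drop] at this; omega
          have hLi : L[(k+1)+i] = q := by rw [← List.getElem_drop (xs := L) (h := hi)]; exact hqi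
          have h1 : (L.map Prod.snd)[(k+1)+i]'(by simpa using hiL) =
              (L.map Prod.snd)[k]'(by simpa using hk) := by
            rw [List.getElem_map, List.getElem_map, hLi, hLk, ← he, hb]
          have := (List.Nodup.getElem_inj_iff hnd).mp h1
          omega
      have hub : u b = chainProd w (L.take (k + 1)) b := by
        conv_lhs => rw [hL2, ← List.take_append_drop (k+1) L]
        rw [chainProd_append_s5]
        show chainProd w (L.take (k+1)) (((L.drop (k+1)).map fun p => Equiv.swap p.1 p.2).prod b) = _
        rw [hfix_drop]
      -- length condition at step k
      have hlen : invLength (chainProd w (L.take k) * Equiv.swap a b) =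
          invLength (chainProd w (L.take k)) + 1 := by
        rw [show Equiv.swap a b = Equiv.swap L[k].1 L[k].2 by rw [hLk],
          ← chainProd_take_succ w L k hk, hL3 k (le_of_lt hk), hL3 (k+1) hk]
        omega
      have hasc : chainProd w (L.take k) a < chainProd w (L.take k) b :=
        asc_of_len _ a b hab hlen
      have hubw : u b < w b := by
        rw [hub, chainProd_take_succ w L k hk, hLk, ← ha, ← hb]
        have : (chainProd w (L.take k) * Equiv.swap a b) b = chainProd w (L.take k) a := by
          simp [Equiv.Perm.mul_apply, Equiv.swap_apply_right]
        rw [this, ← hwb]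
        exact hasc
      apply Finset.mem_union_right
      rw [huj, hp2]
      exact Finset.mem_image_of_mem w (by simp [hbm, hubw])
end

section
/- Let n ≥ 1, let m, p be positive integers with m + p ≤ n, and let u be a permutation of {1,2,…,n}. Then r(m,p) ≤ u in the Bruhat order if and only if max{u(1), u(2), …, u(m)} ≥ m + p. -/
/-- `ρ` is the cyclic permutation `r(m,p)` of `{1,…,n}` (with `x : Fin n` standing for the
element `x+1`): it sends `m ↦ m+p`, sends `m+i ↦ m+i−1` for `1 ≤ i ≤ p`, and fixes all
other elements. -/
def IsRPerm (n m p : ℕ) (ρ : Equiv.Perm (Fin n)) : Prop :=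
  ∀ x : Fin n,
    ((x : ℕ) + 1 = m → (ρ x : ℕ) + 1 = m + p) ∧
    (m < (x : ℕ) + 1 → (x : ℕ) + 1 ≤ m + p → (ρ x : ℕ) + 1 + 1 = (x : ℕ) + 1) ∧
    ((x : ℕ) + 1 ≠ m → ¬(m < (x : ℕ) + 1 ∧ (x : ℕ) + 1 ≤ m + p) → ρ x = x)

/-- The Bruhat order on permutations of `{1,…,n}`: `v ≤ u` iff there is a chain
`v = v₀, v₁, …, v_k = u` where each `v_{j+1} = v_j τ_{ab}` for a transposition `τ_{ab}`
with `ℓ(v_{j+1}) > ℓ(v_j)`. -/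
def bruhatLE {n : ℕ} (v u : Equiv.Perm (Fin n)) : Prop :=
  Relation.ReflTransGen
    (fun x y => ∃ a b : Fin n, a ≠ b ∧ y = x * Equiv.swap a b ∧ invLength x < invLength y)
    v u

section Aux
open Finset Equiv
lemma invLength_lt_mul_swap {n : ℕ} (w : Equiv.Perm (Fin n)) (a b : Fin n) (hab : a < b)
    (h : w a < w b) : invLength w < invLength (w * Equiv.swap a b) := by
  classical
  set σ := Equiv.swap a b with hσ
  have hw' : ∀ x, (w * σ) x = w (σ x) := fun x => rfl
  have hσσ : ∀ x, σ (σ x) = x := fun x => Equiv.swap_apply_self a b x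
  set I := Finset.univ.filter fun q : Fin n × Fin n => q.1 < q.2 ∧ w q.2 < w q.1 with hI
  set I' := Finset.univ.filter fun q : Fin n × Fin n => q.1 < q.2 ∧ (w * σ) q.2 < (w * σ) q.1 with hI'
  have hab_mem : (a, b) ∈ I' := by
    simp only [hI', mem_filter, mem_univ, true_and]
    refine ⟨hab, ?_⟩
    rw [hw', hw', hσ, Equiv.swap_apply_left, Equiv.swap_apply_right]
    exact h
  have key : I.card ≤ (I'.erase (a, b)).card := by
    apply Finset.card_le_card_of_injOn (fun q => if σ q.1 < σ q.2 then (σ q.1, σ q.2) else q)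
    · rintro ⟨i, j⟩ hq
      simp only [hI, Finset.mem_coe, mem_filter, mem_univ, true_and] at hq
      obtain ⟨h12, hinv⟩ := hq
      by_cases hlt : σ i < σ j
      · simp only [if_pos hlt]
        refine Finset.mem_erase.mpr ⟨?_, ?_⟩
        · intro hc
          have h1 : σ i = a := congrArg Prod.fst hc
          have h2 : σ j = b := congrArg Prod.snd hc
          have hi : i = b := by rw [← hσσ i, h1, hσ, Equiv.swap_apply_left]
          have hj : j = a := by rw [← hσσ j, h2, hσ, Equiv.swap_apply_right]
          rw [hi, hj] at h12
          exact absurd (h12.trans hab) (lt_irrefl b)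
        · simp only [hI', mem_filter, mem_univ, true_and]
          exact ⟨hlt, by rw [hw', hw', hσσ, hσσ]; exact hinv⟩
      · simp only [if_neg hlt]
        refine Finset.mem_erase.mpr ⟨?_, ?_⟩
        · intro hc
          have h1 : i = a := congrArg Prod.fst hc
          have h2 : j = b := congrArg Prod.snd hc
          rw [h1, h2] at hinv
          exact absurd (hinv.trans h) (lt_irrefl _)
        · simp only [hI', mem_filter, mem_univ, true_and]
          refine ⟨h12, ?_⟩
          rw [hw', hw']
          by_cases hia : i = a
      
        
          · subst hia
            by_cases hjb : j = b
            · subst hjb; exact absurd (hinv.trans h) (lt_irrefl _)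
            · have hja : j ≠ i := (ne_of_gt h12)
              rw [hσ, Equiv.swap_apply_left, Equiv.swap_apply_of_ne_of_ne hja hjb]
              exact hinv.trans h
          · by_cases hib : i = b
            · exfalso; apply hlt
              subst hib
              have hja : j ≠ a := ne_of_gt (hab.trans h12)
              have hjb : j ≠ i := (ne_of_gt h12)
              rw [hσ, Equiv.swap_apply_right, Equiv.swap_apply_of_ne_of_ne hja hjb]
              exact hab.trans h12
            · by_cases hjb : j = b
              · subst hjb
                rw [hσ, Equiv.swap_apply_right, Equiv.swap_apply_of_ne_of_ne hia hib]
                exact h.trans hinv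
              · by_cases hja : j = a
                · exfalso; apply hlt; subst hja
                  rw [hσ, Equiv.swap_apply_left, Equiv.swap_apply_of_ne_of_ne hia hib]
                  exact h12.trans hab
                · exfalso; apply hlt
                  rw [hσ, Equiv.swap_apply_of_ne_of_ne hia hib,
                    Equiv.swap_apply_of_ne_of_ne hja hjb]
                  exact h12
    · rintro ⟨i1, j1⟩ hq1 ⟨i2, j2⟩ hq2 heq
      simp only [hI, Finset.coe_filter, Set.mem_setOf_eq, mem_univ, true_and] at hq1 hq2
      by_cases c1 : σ i1 < σ j1 <;> by_cases c2 : σ i2 < σ j2 <;>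
        simp only [c1, c2, if_pos, if_neg, ite_true, ite_false] at heq
      · have e1 : σ i1 = σ i2 := congrArg Prod.fst heq
        have e2 : σ j1 = σ j2 := congrArg Prod.snd heq
        exact Prod.ext (σ.injective e1) (σ.injective e2)
      · exfalso; apply c2
        have e1 : σ i1 = i2 := congrArg Prod.fst heq
        have e2 : σ j1 = j2 := congrArg Prod.snd heq
        rw [← e1, ← e2, hσσ, hσσ]
        exact hq1.1
      · exfalso; apply c1
        have e1 : i1 = σ i2 := congrArg Prod.fst heq
        have e2 : j1 = σ j2 := congrArg Prod.snd heq
        rw [e1, e2, hσσ, hσσ]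
        exact hq2.1
      · exact heq
  have h1 : (I'.erase (a, b)).card = I'.card - 1 := Finset.card_erase_of_mem hab_mem
  have h2 : 0 < I'.card := Finset.card_pos.mpr ⟨_, hab_mem⟩
  show I.card < I'.card
  omega

lemma swap_mul_cancel {n : ℕ} (x : Equiv.Perm (Fin n)) (a b : Fin n) :
    x * Equiv.swap a b * Equiv.swap a b = x := by
  rw [mul_assoc, Equiv.swap_mul_self, mul_one]

lemma apply_lt_of_invLength_lt {n : ℕ} (x : Equiv.Perm (Fin n)) (a b : Fin n) (hab : a < b)
    (h : invLength x < invLength (x * Equiv.swap a b)) : x a < x b := by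
  rcases lt_trichotomy (x a) (x b) with h' | h' | h'
  · exact h'
  · exact absurd (x.injective h') (ne_of_lt hab)
  · exfalso
    have h2 := invLength_lt_mul_swap (x * Equiv.swap a b) a b hab
      (by rw [Equiv.Perm.mul_apply, Equiv.Perm.mul_apply, Equiv.swap_apply_left,
        Equiv.swap_apply_right]; exact h')
    rw [swap_mul_cancel] at h2
    omega

lemma card_filter_lt_fin {n : ℕ} (c : Fin n) :
    ((Finset.univ.filter fun d : Fin n => d < c).card) = (c : ℕ) := by
  rw [show (Finset.univ.filter fun d : Fin n => d < c) = Finset.Iio c by ext d; simp]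
  exact Fin.card_Iio c

lemma card_filter_apply_lt {n : ℕ} (u : Equiv.Perm (Fin n)) (c : Fin n) :
    ((Finset.univ.filter fun d : Fin n => u d < c).card) = (c : ℕ) := by
  rw [← card_filter_lt_fin c]
  apply Finset.card_bij (fun d _ => u d)
  · intro a ha; simp only [mem_filter, mem_univ, true_and] at ha ⊢; exact ha
  · intro a _ b _ h; exact u.injective h
  · intro b hb; simp only [mem_filter, mem_univ, true_and] at hb
    exact ⟨u.symm b, by simp [hb], by simp⟩

lemma step_preserve' {n m p : ℕ} (x : Equiv.Perm (Fin n)) (a b : Fin n) (hab : a < b)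
    (hxab : x a < x b)
    (h : ∃ j : Fin n, (j : ℕ) < m ∧ m + p ≤ (x j : ℕ) + 1) :
    ∃ j : Fin n, (j : ℕ) < m ∧ m + p ≤ ((x * Equiv.swap a b) j : ℕ) + 1 := by
  obtain ⟨j, hj, hjbig⟩ := h
  have hxa : (x * Equiv.swap a b) a = x b := by
    rw [Equiv.Perm.mul_apply, Equiv.swap_apply_left]
  by_cases hja : j = a
  · subst hja
    refine ⟨j, hj, ?_⟩
    rw [hxa]
    have := Fin.lt_def.mp hxab
    omega
  by_cases hjb : j = b
  · subst hjb
    refine ⟨a, ?_, ?_⟩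
    · have := Fin.lt_def.mp hab; omega
    · rw [hxa]; exact hjbig
  · refine ⟨j, hj, ?_⟩
    rw [Equiv.Perm.mul_apply, Equiv.swap_apply_of_ne_of_ne hja hjb]
    exact hjbig

lemma step_preserve {n m p : ℕ} (x : Equiv.Perm (Fin n)) (a b : Fin n) (hne : a ≠ b)
    (hlen : invLength x < invLength (x * Equiv.swap a b))
    (h : ∃ j : Fin n, (j : ℕ) < m ∧ m + p ≤ (x j : ℕ) + 1) :
    ∃ j : Fin n, (j : ℕ) < m ∧ m + p ≤ ((x * Equiv.swap a b) j : ℕ) + 1 := by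
  rcases hne.lt_or_gt with hab | hba
  · exact step_preserve' x a b hab (apply_lt_of_invLength_lt x a b hab hlen) h
  · rw [Equiv.swap_comm] at hlen ⊢
    exact step_preserve' x b a hba (apply_lt_of_invLength_lt x b a hba hlen) h

lemma crux {n : ℕ} (m p : ℕ) (hm : 1 ≤ m) (hp : 1 ≤ p) (hmp : m + p ≤ n)
    (ρ : Equiv.Perm (Fin n)) (hρ : IsRPerm n m p ρ) (u : Equiv.Perm (Fin n))
    (hyp : ∃ k : Fin n, (k : ℕ) < m ∧ m + p ≤ (u k : ℕ) + 1) :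
    u = ρ ∨ ∃ a b : Fin n, a < b ∧ u b < u a ∧
      ∃ j : Fin n, (j : ℕ) < m ∧ m + p ≤ (u (Equiv.swap a b j) : ℕ) + 1 := by
  by_cases hs : ∃ a b : Fin n, a < b ∧ u b < u a ∧
      ∃ j : Fin n, (j : ℕ) < m ∧ m + p ≤ (u (Equiv.swap a b j) : ℕ) + 1
  · right; exact hs
  left
  obtain ⟨k, hk, hkbig⟩ := hyp
  have hMlt : m - 1 < n := by omega
  set M : Fin n := ⟨m - 1, hMlt⟩ with hM
  have hMval : (M : ℕ) = m - 1 := rfl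
  -- increasing on first block
  have incP : ∀ a b : Fin n, (b : ℕ) < m → a < b → u a < u b := by
    intro a b hbm hab
    rcases lt_trichotomy (u a) (u b) with h | h | h
    · exact h
    · exact absurd (u.injective h) (ne_of_lt hab)
    · exfalso; apply hs
      refine ⟨a, b, hab, h, ?_⟩
      by_cases hk1 : k = a
      · exact ⟨b, hbm, by rw [Equiv.swap_apply_right]; subst hk1; exact hkbig⟩
      by_cases hk2 : k = b
      · refine ⟨b, hbm, ?_⟩
        rw [Equiv.swap_apply_right]
        have hv := Fin.lt_def.mp h
        subst hk2; omega
      · exact ⟨k, hk, by rw [Equiv.swap_apply_of_ne_of_ne hk1 hk2]; exact hkbig⟩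
  have Mbig : m + p ≤ (u M : ℕ) + 1 := by
    by_cases hkM : k = M
    · subst hkM; exact hkbig
    · have hkv : (k : ℕ) ≠ m - 1 := fun h => hkM (Fin.ext (h.trans hMval.symm))
      have hkM' : k < M := Fin.lt_def.mpr (by omega)
      have := Fin.lt_def.mp (incP k M (by omega) hkM')
      omega
  have incQ : ∀ a b : Fin n, m ≤ (a : ℕ) → a < b → u a < u b := by
    intro a b ham hab
    rcases lt_trichotomy (u a) (u b) with h | h | h
    · exact h
    · exact absurd (u.injective h) (ne_of_lt hab)
    · exfalso; apply hs
      have habv := Fin.lt_def.mp hab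
      refine ⟨a, b, hab, h, M, by omega, ?_⟩
      have hMa : M ≠ a := fun hh => by have := congrArg Fin.val hh; simp [hMval] at this; omega
      have hMb : M ≠ b := fun hh => by have := congrArg Fin.val hh; simp [hMval] at this; omega
      rw [Equiv.swap_apply_of_ne_of_ne hMa hMb]
      exact Mbig
  have cross : ∀ a b : Fin n, (a : ℕ) < m - 1 → m ≤ (b : ℕ) → u a < u b := by
    intro a b ham hbm
    rcases lt_trichotomy (u a) (u b) with h | h | h
    · exact h
    · exact absurd (u.injective h) (fun hh => by have := congrArg Fin.val hh; omega)
    · exfalso; apply hs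
      have hab : a < b := Fin.lt_def.mpr (by omega)
      refine ⟨a, b, hab, h, M, by omega, ?_⟩
      have hMa : M ≠ a := fun hh => by have := congrArg Fin.val hh; simp [hMval] at this; omega
      have hMb : M ≠ b := fun hh => by have := congrArg Fin.val hh; simp [hMval] at this; omega
      rw [Equiv.swap_apply_of_ne_of_ne hMa hMb]
      exact Mbig
  have cnt : ∀ x : Fin n,
      ((Finset.univ.filter fun d : Fin n => u d < u x).card) = (u x : ℕ) :=
    fun x => card_filter_apply_lt u (u x)
  have low : ∀ x : Fin n, (x : ℕ) < m - 1 → (u x : ℕ) = (x : ℕ) := by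
    intro x hx
    have hset : (Finset.univ.filter fun d : Fin n => u d < u x)
        = (Finset.univ.filter fun d : Fin n => d < x) := by
      ext d
      simp only [mem_filter, mem_univ, true_and]
      constructor
      · intro hd
        by_contra hdx
        have hxd : x ≤ d := le_of_not_gt hdx
        rcases eq_or_lt_of_le hxd with rfl | hxd
        · exact lt_irrefl _ hd
        · have : u x < u d := by
            by_cases hdm : (d : ℕ) < m
            · exact incP x d hdm hxd
            · exact cross x d hx (by omega)
          exact absurd hd (not_lt.mpr this.le)
      · intro hd
        exact incP d x (by omega) hd
    rw [← cnt x, hset, card_filter_lt_fin]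
  have ubig : ∀ c : Fin n, m ≤ (c : ℕ) → m - 1 ≤ (u c : ℕ) := by
    intro c hc
    by_contra hlt
    push_neg at hlt
    set d : Fin n := ⟨(u c : ℕ), (u c).isLt⟩ with hd
    have h1 : (u d : ℕ) = (d : ℕ) := low d hlt
    have h2 : u d = u c := Fin.ext (by rw [h1])
    have h3 : d = c := u.injective h2
    have := congrArg Fin.val h3
    simp only [hd] at this
    omega
  set T := (u M : ℕ) with hT
  have hTn : T < n := (u M).isLt
  have struct : ∀ c : Fin n, m ≤ (c : ℕ) →
      ((u c : ℕ) = (c : ℕ) ∧ T < (u c : ℕ)) ∨ ((u c : ℕ) + 1 = (c : ℕ) ∧ (u c : ℕ) < T) := by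
    intro c hc
    have hcM : c ≠ M := fun hh => by have := congrArg Fin.val hh; simp [hMval] at this; omega
    have hneT : (u c : ℕ) ≠ T := fun hh => hcM (u.injective (Fin.ext hh))
    by_cases hcmp : T < (u c : ℕ)
    · left
      refine ⟨?_, hcmp⟩
      have hset : (Finset.univ.filter fun d : Fin n => u d < u c)
          = (Finset.univ.filter fun d : Fin n => d < c) := by
        ext d
        simp only [mem_filter, mem_univ, true_and]
        constructor
        · intro hd
          by_contra hdc
          rcases eq_or_lt_of_le (le_of_not_gt hdc) with rfl | hcd
          · exact lt_irrefl _ hd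
          · exact absurd hd (not_lt.mpr (incQ c d hc hcd).le)
        · intro hdc
          by_cases hdm : (d : ℕ) < m - 1
          · have := low d hdm
            exact Fin.lt_def.mpr (by omega)
          · by_cases hdM : (d : ℕ) = m - 1
            · have : d = M := Fin.ext (by rw [hdM])
              rw [this]
              exact Fin.lt_def.mpr hcmp
            · exact incQ d c (by omega) hdc
      rw [← cnt c, hset, card_filter_lt_fin]
    · right
      have hcmp' : (u c : ℕ) < T := by omega
      refine ⟨?_, hcmp'⟩
      have hset : (Finset.univ.filter fun d : Fin n => u d < u c)
          = ((Finset.univ.filter fun d : Fin n => d < c).erase M) := by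
        ext d
        simp only [Finset.mem_erase, mem_filter, mem_univ, true_and]
        constructor
        · intro hd
          constructor
          · intro hdM
            rw [hdM] at hd
            have := Fin.lt_def.mp hd
            omega
          · by_contra hdc
            rcases eq_or_lt_of_le (le_of_not_gt hdc) with rfl | hcd
            · exact lt_irrefl _ hd
            · exact absurd hd (not_lt.mpr (incQ c d hc hcd).le)
        · rintro ⟨hdM, hdc⟩
          by_cases hdm : (d : ℕ) < m - 1
          · have h1 := low d hdm
            have h2 := ubig c hc
            exact Fin.lt_def.mpr (by omega)
          · have hdv : (d : ℕ) ≠ m - 1 := fun hh => hdM (Fin.ext (hh.trans hMval.symm))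
            exact incQ d c (by omega) hdc
      have hMc : M < c := Fin.lt_def.mpr (by omega)
      have hMmem : M ∈ Finset.univ.filter fun d : Fin n => d < c := by
        simp only [mem_filter, mem_univ, true_and]; exact hMc
      rw [← cnt c, hset, Finset.card_erase_of_mem hMmem, card_filter_lt_fin]
      omega
  by_cases hTeq : T = m + p - 1
  · apply Equiv.ext
    intro x
    obtain ⟨c1, c2, c3⟩ := hρ x
    by_cases h1 : (x : ℕ) < m - 1
    · have hux := low x h1
      have hρx : ρ x = x := c3 (by omega) (by omega)
      rw [hρx]
      exact Fin.ext (by omega)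
    by_cases h2 : (x : ℕ) = m - 1
    · have hxM : x = M := Fin.ext (by rw [h2])
      have hρ1 : (ρ x : ℕ) + 1 = m + p := c1 (by omega)
      have hux : (u x : ℕ) = T := by rw [hxM, hT]
      exact Fin.ext (by omega)
    · have hxm : m ≤ (x : ℕ) := by omega
      rcases struct x hxm with ⟨he, ht⟩ | ⟨he, ht⟩
      · have hρx : ρ x = x := c3 (by omega) (by omega)
        rw [hρx]
        exact Fin.ext he
      · have := c2 (by omega) (by omega)
        exact Fin.ext (by omega)
  · exfalso
    have hT2 : m + p ≤ T := by omega
    have hbn : m + p < n := by omega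
    set b : Fin n := ⟨m + p, hbn⟩ with hb
    have hbv : (b : ℕ) = m + p := rfl
    rcases struct b (by omega) with ⟨he, ht⟩ | ⟨he, ht⟩
    · omega
    · apply hs
      have hMb : M < b := Fin.lt_def.mpr (by omega)
      refine ⟨M, b, hMb, Fin.lt_def.mpr (by omega), M, by omega, ?_⟩
      rw [Equiv.swap_apply_left]
      omega

end Aux

open Finset

/-- `r(m,p) ≤ u` in the Bruhat order iff `max{u(1),…,u(m)} ≥ m + p`. -/

theorem stmt9 (n m p : ℕ) (hn : 1 ≤ n) (hm : 1 ≤ m) (hp : 1 ≤ p) (hmp : m + p ≤ n)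
    (ρ : Equiv.Perm (Fin n)) (hρ : IsRPerm n m p ρ) (u : Equiv.Perm (Fin n)) :
    bruhatLE ρ u ↔
      m + p ≤ (Finset.univ.filter fun j : Fin n => (j : ℕ) < m).sup
        (fun j => (u j : ℕ) + 1) := by
  have hsup : ∀ v : Equiv.Perm (Fin n),
      (m + p ≤ (Finset.univ.filter fun j : Fin n => (j : ℕ) < m).sup
        (fun j => (v j : ℕ) + 1)) ↔ ∃ j : Fin n, (j : ℕ) < m ∧ m + p ≤ (v j : ℕ) + 1 := by
    intro v
    rw [Finset.le_sup_iff (show (⊥ : ℕ) < m + p by simp; omega)]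
    constructor
    · rintro ⟨j, hj, hle⟩
      simp only [mem_filter, mem_univ, true_and] at hj
      exact ⟨j, hj, hle⟩
    · rintro ⟨j, hj, hle⟩
      exact ⟨j, by simp only [mem_filter, mem_univ, true_and]; exact hj, hle⟩
  rw [hsup u]
  constructor
  · intro h
    induction h with
    | refl =>
        have hMlt : m - 1 < n := by omega
        have := (hρ ⟨m - 1, hMlt⟩).1 (by simp; omega)
        exact ⟨⟨m - 1, hMlt⟩, by simp; omega, by omega⟩
    | tail hchain hstep ih =>
        obtain ⟨a, b, hne, rfl, hlen⟩ := hstep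
        exact step_preserve _ a b hne hlen ih
  · intro h
    have H : ∀ N, ∀ v : Equiv.Perm (Fin n), invLength v < N →
        (∃ j : Fin n, (j : ℕ) < m ∧ m + p ≤ (v j : ℕ) + 1) → bruhatLE ρ v := by
      intro N
      induction N with
      | zero => intro v hv _; exact absurd hv (Nat.not_lt_zero _)
      | succ N ih =>
        intro v hv hhyp
        rcases crux m p hm hp hmp ρ hρ v hhyp with rfl | ⟨a, b, hab, hdesc, j, hj, hjbig⟩
        · exact Relation.ReflTransGen.refl
        · set x := v * Equiv.swap a b with hx
          have hxv : v = x * Equiv.swap a b := (swap_mul_cancel v a b).symm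
          have hxa : x a = v b := by rw [hx, Equiv.Perm.mul_apply, Equiv.swap_apply_left]
          have hxb : x b = v a := by rw [hx, Equiv.Perm.mul_apply, Equiv.swap_apply_right]
          have hlen : invLength x < invLength v := by
            have h2 := invLength_lt_mul_swap x a b hab (by rw [hxa, hxb]; exact hdesc)
            rwa [← hxv] at h2
          have hhypx : ∃ j : Fin n, (j : ℕ) < m ∧ m + p ≤ (x j : ℕ) + 1 :=
            ⟨j, hj, by rw [hx, Equiv.Perm.mul_apply]; exact hjbig⟩
          exact Relation.ReflTransGen.tail (ih x (by omega) hhypx) ⟨a, b, hab.ne, hxv, hlen⟩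
    exact H (invLength u + 1) u (Nat.lt_succ_self _) h
end
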